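/- Let G be a 2-connected unit interval graph with unit interval order <, extreme vertices v_L and v_R, and let H = {u,v} be a P₃-hull set with H ≠ {v_L, v_R}. Then the percolation time of H equals max{τ_H(v_L), τ_H(v_R)}, where τ_H(x) is the least k with x ∈ I^k[H]. -/

import Mathlib

open SimpleGraph

variable {V : Type*}

/-- The `P₃`-interval operator: add every vertex with at least two neighbors in `S`. -/
def pInterval (G : SimpleGraph V) (S : Set V) : Set V :=
  S ∪ {v | ∃ u w, u ≠ w ∧ u ∈ S ∧ w ∈ S ∧ G.Adj u v ∧ G.Adj w v}

/-- `pIter G S k = I^k[S]`. -/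
def pIter (G : SimpleGraph V) (S : Set V) : ℕ → Set V
  | 0 => S
  | k + 1 => pInterval G (pIter G S k)

/-- `S` is a `P₃`-hull set of `G` (it percolates `G`). -/
def Percolates (G : SimpleGraph V) (S : Set V) : Prop :=
  ∃ k, pIter G S k = Set.univ

/-- Percolation time of a hull set `S`. -/
noncomputable def percTime (G : SimpleGraph V) (S : Set V) : ℕ :=
  sInf {k | pIter G S k = Set.univ}

/-- The least `k` such that `x ∈ I^k[S]`. -/
noncomputable def percTimeAt (G : SimpleGraph V) (S : Set V) (x : V) : ℕ :=
  sInf {k | x ∈ pIter G S k}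

/-- The percolation time of `G`: the maximum percolation time over all hull sets. -/
noncomputable def percolationTime (G : SimpleGraph V) : ℕ :=
  sSup {t | ∃ S : Set V, Percolates G S ∧ percTime G S = t}

/-- A `P₃`-geodetic set: every vertex outside `S` has at least two neighbors in `S`. -/
def IsGeodetic (G : SimpleGraph V) (S : Set V) : Prop :=
  ∀ v, v ∉ S → ∃ u w, u ≠ w ∧ u ∈ S ∧ w ∈ S ∧ G.Adj u v ∧ G.Adj w v

/-- The `P₃`-geodetic number of `G`. -/
noncomputable def geodeticNumber (G : SimpleGraph V) : ℕ :=
  sInf {n | ∃ S : Set V, IsGeodetic G S ∧ S.ncard = n}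

/-- The `P₃`-hull number of `G`. -/
noncomputable def hullNumber (G : SimpleGraph V) : ℕ :=
  sInf {n | ∃ S : Set V, Percolates G S ∧ S.ncard = n}

/-- A linear order on the vertices of `G` is a unit interval order if every closed
neighborhood is an interval of consecutive vertices. -/
def IsUnitIntervalOrder (G : SimpleGraph V) [LinearOrder V] : Prop :=
  ∀ v x y z : V, (x = v ∨ G.Adj v x) → (z = v ∨ G.Adj v z) → x ≤ y → y ≤ z →
    (y = v ∨ G.Adj v y)

/-- `G` is 2-connected: at least three vertices, connected, and no cut vertex. -/
def TwoConnected (G : SimpleGraph V) [Fintype V] : Prop :=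
  3 ≤ Fintype.card V ∧ G.Connected ∧ ∀ v : V, (G.induce ({v}ᶜ : Set V)).Connected

section Aux

variable [LinearOrder V] {G : SimpleGraph V}

/-- Order-convexity of a set of vertices. -/
def SConvex (S : Set V) : Prop :=
  ∀ ⦃x y z : V⦄, x ∈ S → z ∈ S → x ≤ y → y ≤ z → y ∈ S

lemma adj_of_between (hG : IsUnitIntervalOrder G) {a z p q : V}
    (h : G.Adj a z) (hap : a ≤ p) (hpq : p ≤ q) (hqz : q ≤ z) (hne : p ≠ q) :
    G.Adj p q := by
  have hq : q = a ∨ G.Adj a q := hG a a q z (Or.inl rfl) (Or.inr h) (hap.trans hpq) hqz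
  have hxa : a = q ∨ G.Adj q a := by
    rcases hq with h' | h'
    · exact Or.inl h'.symm
    · exact Or.inr h'.symm
  have := hG q a p q hxa (Or.inl rfl) hap hpq
  rcases this with h' | h'
  · exact absurd h' hne
  · exact h'.symm

lemma subset_pInterval (G : SimpleGraph V) (S : Set V) : S ⊆ pInterval G S :=
  Set.subset_union_left

lemma pIter_mono (G : SimpleGraph V) (S : Set V) {k m : ℕ} (h : k ≤ m) :
    pIter G S k ⊆ pIter G S m := by
  induction m with
  | zero => obtain rfl := Nat.le_zero.mp h; exact subset_rfl
  | succ n ih =>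
    rcases eq_or_lt_of_le h with rfl | h'
    · exact subset_rfl
    · exact (ih (Nat.lt_succ_iff.mp h')).trans (subset_pInterval _ _)

lemma pIter_fixed {S : Set V} (h : pInterval G S = S) : ∀ k, pIter G S k = S
  | 0 => rfl
  | k + 1 => by
      show pInterval G (pIter G S k) = S
      rw [pIter_fixed h k, h]

lemma pair_elim {u v w : V} (huv : u ≠ v) (h : w ∈ pInterval G {u, v}) :
    w = u ∨ w = v ∨ (G.Adj u w ∧ G.Adj v w) := by
  rcases h with h | ⟨p, q, hpq, hp, hq, h1, h2⟩
  · rcases h with h | h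
    · exact Or.inl h
    · exact Or.inr (Or.inl h)
  · right; right
    simp only [Set.mem_insert_iff, Set.mem_singleton_iff] at hp hq
    rcases hp with rfl | rfl <;> rcases hq with rfl | rfl
    · exact absurd rfl hpq
    · exact ⟨h1, h2⟩
    · exact ⟨h2, h1⟩
    · exact absurd rfl hpq

lemma exists_common [Fintype V] (hC : 3 ≤ Fintype.card V) {u v : V} (huv : u ≠ v)
    (hhull : Percolates G {u, v}) :
    ∃ c, c ≠ u ∧ c ≠ v ∧ G.Adj u c ∧ G.Adj v c := by
  classical
  by_cases hfix : pInterval G {u, v} = {u, v}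
  · exfalso
    obtain ⟨K, hK⟩ := hhull
    have huniv : (Set.univ : Set V) = {u, v} := by
      rw [← hK]; exact pIter_fixed hfix K
    have hcard : Fintype.card V = 2 := by
      have h1 : (Set.univ : Set V).ncard = Fintype.card V := by
        rw [Set.ncard_univ, Nat.card_eq_fintype_card]
      have h2 : ({u, v} : Set V).ncard = 2 := Set.ncard_pair huv
      rw [← h1, huniv, h2]
    omega
  · obtain ⟨c, hc1, hc2⟩ : ∃ c, c ∈ pInterval G {u, v} ∧ c ∉ ({u, v} : Set V) := by
      by_contra h'
      push_neg at h'
      exact hfix (le_antisymm h' (subset_pInterval _ _))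
    simp only [Set.mem_insert_iff, Set.mem_singleton_iff, not_or] at hc2
    rcases pair_elim huv hc1 with rfl | rfl | ⟨ha, hb⟩
    · exact absurd rfl hc2.1
    · exact absurd rfl hc2.2
    · exact ⟨c, hc2.1, hc2.2, ha, hb⟩

lemma spreadDown (hG : IsUnitIntervalOrder G) {S : Set V} {y z : V}
    (hz : z ∈ pInterval G S) (hyz : y < z) (hall : ∀ s ∈ S, s < y) :
    y ∈ pInterval G S := by
  rcases hz with hz | ⟨p, q, hpq, hp, hq, h1, h2⟩
  · exact absurd (hall z hz) (lt_asymm hyz)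
  · have hpy := hall p hp
    have hqy := hall q hq
    have hadj : G.Adj p y ∧ G.Adj q y := by
      rcases le_total p q with hle | hle
      · exact ⟨adj_of_between hG h1 le_rfl hpy.le hyz.le hpy.ne,
          adj_of_between hG h1 hle hqy.le hyz.le hqy.ne⟩
      · exact ⟨adj_of_between hG h2 hle hpy.le hyz.le hpy.ne,
          adj_of_between hG h2 le_rfl hqy.le hyz.le hqy.ne⟩
    exact Or.inr ⟨p, q, hpq, hp, hq, hadj.1, hadj.2⟩

lemma spreadUp (hG : IsUnitIntervalOrder G) {S : Set V} {y x : V}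
    (hx : x ∈ pInterval G S) (hxy : x < y) (hall : ∀ s ∈ S, y < s) :
    y ∈ pInterval G S := by
  rcases hx with hx | ⟨p, q, hpq, hp, hq, h1, h2⟩
  · exact absurd (hall x hx) (lt_asymm hxy)
  · have hpy := hall p hp
    have hqy := hall q hq
    have hadj : G.Adj y p ∧ G.Adj y q := by
      rcases le_total p q with hle | hle
      · exact ⟨adj_of_between hG h2.symm hxy.le hpy.le hle hpy.ne,
          adj_of_between hG h2.symm hxy.le hqy.le le_rfl hqy.ne⟩
      · exact ⟨adj_of_between hG h1.symm hxy.le hpy.le le_rfl hpy.ne,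
          adj_of_between hG h1.symm hxy.le hqy.le hle hqy.ne⟩
    exact Or.inr ⟨p, q, hpq, hp, hq, hadj.1.symm, hadj.2.symm⟩

lemma convStep (hG : IsUnitIntervalOrder G) {S : Set V} (hS : SConvex S) :
    SConvex (pInterval G S) := by
  intro x y z hx hz hxy hyz
  by_cases hyS : y ∈ S
  · exact Set.mem_union_left _ hyS
  by_cases hdn : ∃ s ∈ S, s ≤ y
  · by_cases hup : ∃ s ∈ S, y ≤ s
    · obtain ⟨s2, hs2, h2⟩ := hdn
      obtain ⟨s1, hs1, h1⟩ := hup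
      exact absurd (hS hs2 hs1 h2 h1) hyS
    · push_neg at hup
      rcases eq_or_lt_of_le hyz with rfl | hlt
      · exact hz
      · exact spreadDown hG hz hlt hup
  · push_neg at hdn
    rcases eq_or_lt_of_le hxy with rfl | hlt
    · exact hx
    · exact spreadUp hG hx hlt hdn

lemma conv2 (hG : IsUnitIntervalOrder G) {u v c : V} (huv : u ≠ v)
    (hcu : c ≠ u) (hcv : c ≠ v) (hu : G.Adj u c) (hv : G.Adj v c) :
    SConvex (pInterval G (pInterval G ({u, v} : Set V))) := by
  set S1 := pInterval G ({u, v} : Set V) with hS1def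
  have hu1 : u ∈ S1 := Set.mem_union_left _ (by simp)
  have hv1 : v ∈ S1 := Set.mem_union_left _ (by simp)
  have hc1 : c ∈ S1 := Set.mem_union_right _ ⟨u, v, huv, by simp, by simp, hu, hv⟩
  intro x y z hx hz hxy hyz
  by_cases hyS : y ∈ S1
  · exact Set.mem_union_left _ hyS
  have hyu : y ≠ u := fun h => hyS (by rw [h]; exact hu1)
  have hyv : y ≠ v := fun h => hyS (by rw [h]; exact hv1)
  have hyc : y ≠ c := fun h => hyS (by rw [h]; exact hc1)
  by_cases hdn : ∃ s ∈ S1, s ≤ y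
  · by_cases hup : ∃ s ∈ S1, y ≤ s
    · obtain ⟨s2, hs2, hs2le⟩ := hdn
      obtain ⟨s1, hs1, hs1le⟩ := hup
      rcases le_or_gt y c with h1c | h1c
      · rcases le_or_gt u y with h2u | h2u
        · -- u ≤ y ≤ c
          have hA : G.Adj u y := adj_of_between hG hu le_rfl h2u h1c (Ne.symm hyu)
          have hB : G.Adj y c := adj_of_between hG hu h2u h1c le_rfl hyc
          exact Set.mem_union_right _ ⟨u, c, Ne.symm hcu, hu1, hc1, hA, hB.symm⟩
        · rcases le_or_gt v y with h2v | h2v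
          · -- v ≤ y ≤ c
            have hA : G.Adj v y := adj_of_between hG hv le_rfl h2v h1c (Ne.symm hyv)
            have hB : G.Adj y c := adj_of_between hG hv h2v h1c le_rfl hyc
            exact Set.mem_union_right _ ⟨v, c, Ne.symm hcv, hv1, hc1, hA, hB.symm⟩
          · -- y < u, y < v
            have hs2y : s2 < y := hs2le.lt_of_ne (fun h => hyS (by rw [← h]; exact hs2))
            rcases pair_elim huv hs2 with rfl | rfl | ⟨ha, hb⟩
            · exact absurd hs2y (lt_asymm h2u)
            · exact absurd hs2y (lt_asymm h2v)
            · have hA : G.Adj y u := adj_of_between hG ha.symm hs2y.le h2u.le le_rfl hyu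
              have hB : G.Adj y v := adj_of_between hG hb.symm hs2y.le h2v.le le_rfl hyv
              exact Set.mem_union_right _ ⟨u, v, huv, hu1, hv1, hA.symm, hB.symm⟩
      · rcases le_or_gt y u with h2u | h2u
        · -- c < y ≤ u
          have hA : G.Adj c y := adj_of_between hG hu.symm le_rfl h1c.le h2u (Ne.symm hyc)
          have hB : G.Adj y u := adj_of_between hG hu.symm h1c.le h2u le_rfl hyu
          exact Set.mem_union_right _ ⟨c, u, hcu, hc1, hu1, hA, hB.symm⟩
        · rcases le_or_gt y v with h2v | h2v
          · -- c < y ≤ v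
            have hA : G.Adj c y := adj_of_between hG hv.symm le_rfl h1c.le h2v (Ne.symm hyc)
            have hB : G.Adj y v := adj_of_between hG hv.symm h1c.le h2v le_rfl hyv
            exact Set.mem_union_right _ ⟨c, v, hcv, hc1, hv1, hA, hB.symm⟩
          · -- u < y, v < y
            have hys1 : y < s1 := hs1le.lt_of_ne (fun h => hyS (by rw [h]; exact hs1))
            rcases pair_elim huv hs1 with rfl | rfl | ⟨ha, hb⟩
            · exact absurd hys1 (lt_asymm h2u)
            · exact absurd hys1 (lt_asymm h2v)
            · have hA : G.Adj u y := adj_of_between hG ha le_rfl h2u.le hys1.le (Ne.symm hyu)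
              have hB : G.Adj v y := adj_of_between hG hb le_rfl h2v.le hys1.le (Ne.symm hyv)
              exact Set.mem_union_right _ ⟨u, v, huv, hu1, hv1, hA, hB⟩
    · push_neg at hup
      rcases eq_or_lt_of_le hyz with rfl | hlt
      · exact hz
      · exact spreadDown hG hz hlt hup
  · push_neg at hdn
    rcases eq_or_lt_of_le hxy with rfl | hlt
    · exact hx
    · exact spreadUp hG hx hlt hdn

lemma convIter (hG : IsUnitIntervalOrder G) {u v c : V} (huv : u ≠ v)
    (hcu : c ≠ u) (hcv : c ≠ v) (hu : G.Adj u c) (hv : G.Adj v c) :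
    ∀ m, SConvex (pIter G ({u, v} : Set V) (m + 2)) := by
  intro m
  induction m with
  | zero => exact conv2 hG huv hcu hcv hu hv
  | succ k ih => exact convStep hG ih

end Aux

/-- For a two-element hull set `H ≠ {v_L, v_R}` of a 2-connected unit interval graph,
the percolation time of `H` is `max (τ_H(v_L)) (τ_H(v_R))`. -/
theorem percTime_eq_max_extremes {V : Type*} [Fintype V] [LinearOrder V]
    (G : SimpleGraph V) (hG : IsUnitIntervalOrder G) (h2 : TwoConnected G)
    (vL vR : V) (hL : ∀ x, vL ≤ x) (hR : ∀ x, x ≤ vR)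
    (u v : V) (huv : u ≠ v) (hne : ({u, v} : Set V) ≠ {vL, vR})
    (hhull : Percolates G {u, v}) :
    percTime G {u, v} =
      max (percTimeAt G {u, v} vL) (percTimeAt G {u, v} vR) := by
  classical
  obtain ⟨K, hK⟩ := hhull
  have hPne : {k | pIter G {u, v} k = Set.univ}.Nonempty := ⟨K, hK⟩
  have hPmem : pIter G {u, v} (percTime G {u, v}) = Set.univ := Nat.sInf_mem hPne
  have hLne : {k | vL ∈ pIter G {u, v} k}.Nonempty := ⟨K, by rw [Set.mem_setOf_eq, hK]; trivial⟩
  have hRne : {k | vR ∈ pIter G {u, v} k}.Nonempty := ⟨K, by rw [Set.mem_setOf_eq, hK]; trivial⟩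
  have hLmem : vL ∈ pIter G {u, v} (percTimeAt G {u, v} vL) := Nat.sInf_mem hLne
  have hRmem : vR ∈ pIter G {u, v} (percTimeAt G {u, v} vR) := Nat.sInf_mem hRne
  have hgeL : percTimeAt G {u, v} vL ≤ percTime G {u, v} :=
    Nat.sInf_le (by rw [Set.mem_setOf_eq, hPmem]; trivial)
  have hgeR : percTimeAt G {u, v} vR ≤ percTime G {u, v} :=
    Nat.sInf_le (by rw [Set.mem_setOf_eq, hPmem]; trivial)
  have hVne : vL ≠ vR := by
    intro h
    have hu' : u = vL := le_antisymm (h ▸ hR u) (hL u)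
    have hv' : v = vL := le_antisymm (h ▸ hR v) (hL v)
    exact huv (hu'.trans hv'.symm)
  have key : ∀ n, vL ∈ pIter G {u, v} n → vR ∈ pIter G {u, v} n →
      pIter G {u, v} n = Set.univ := by
    intro n
    match n with
    | 0 =>
      intro hLn hRn
      exfalso
      apply hne
      have h1 : vL = u ∨ vL = v := by simpa [pIter] using hLn
      have h2 : vR = u ∨ vR = v := by simpa [pIter] using hRn
      rcases h1 with rfl | rfl <;> rcases h2 with rfl | rfl
      · exact absurd rfl hVne
      · rfl
      · exact Set.pair_comm _ _
      · exact absurd rfl hVne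
    | 1 =>
      intro hLn hRn
      have h1 : vL = u ∨ vL = v ∨ (G.Adj u vL ∧ G.Adj v vL) := pair_elim huv hLn
      have h2 : vR = u ∨ vR = v ∨ (G.Adj u vR ∧ G.Adj v vR) := pair_elim huv hRn
      have hadj : ((G.Adj u vL ∧ G.Adj v vL) ∧ (G.Adj u vR ∧ G.Adj v vR)) ∨ G.Adj vL vR := by
        rcases h1 with rfl | rfl | hA
        · rcases h2 with h | rfl | hB
          · exact absurd h.symm hVne
          · exact absurd rfl hne
          · exact Or.inr hB.1
        · rcases h2 with rfl | h | hB
          · exact absurd (Set.pair_comm vR vL) hne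
          · exact absurd h.symm hVne
          · exact Or.inr hB.2
        · rcases h2 with rfl | rfl | hB
          · exact Or.inr hA.1.symm
          · exact Or.inr hA.2.symm
          · exact Or.inl ⟨hA, hB⟩
      have main : ∀ y, y ∈ pInterval G ({u, v} : Set V) := by
        intro y
        by_cases hy : y ∈ ({u, v} : Set V)
        · exact Set.mem_union_left _ hy
        simp only [Set.mem_insert_iff, Set.mem_singleton_iff, not_or] at hy
        obtain ⟨hyu, hyv⟩ := hy
        rcases hadj with ⟨⟨hA1, hA2⟩, hB1, hB2⟩ | hcomp
        · have ha : G.Adj u y := by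
            rcases le_total y u with h | h
            · exact (adj_of_between hG hA1.symm (hL y) h le_rfl hyu).symm
            · exact adj_of_between hG hB1 le_rfl h (hR y) (Ne.symm hyu)
          have hb : G.Adj v y := by
            rcases le_total y v with h | h
            · exact (adj_of_between hG hA2.symm (hL y) h le_rfl hyv).symm
            · exact adj_of_between hG hB2 le_rfl h (hR y) (Ne.symm hyv)
          exact Set.mem_union_right _ ⟨u, v, huv, by simp, by simp, ha, hb⟩
        · have ha : G.Adj u y := by
            rcases le_total u y with h | h
            · exact adj_of_between hG hcomp (hL u) h (hR y) (Ne.symm hyu)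
            · exact (adj_of_between hG hcomp (hL y) h (hR u) hyu).symm
          have hb : G.Adj v y := by
            rcases le_total v y with h | h
            · exact adj_of_between hG hcomp (hL v) h (hR y) (Ne.symm hyv)
            · exact (adj_of_between hG hcomp (hL y) h (hR v) hyv).symm
          exact Set.mem_union_right _ ⟨u, v, huv, by simp, by simp, ha, hb⟩
      exact Set.eq_univ_of_forall main
    | m + 2 =>
      intro hLn hRn
      obtain ⟨c, hc1, hc2, hc3, hc4⟩ := exists_common h2.1 huv ⟨K, hK⟩
      have hconv : SConvex (pIter G ({u, v} : Set V) (m + 2)) :=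
        convIter hG huv hc1 hc2 hc3 hc4 m
      apply Set.eq_univ_of_forall
      intro y
      exact hconv hLn hRn (hL y) (hR y)
  have hle : percTime G {u, v} ≤ max (percTimeAt G {u, v} vL) (percTimeAt G {u, v} vR) := by
    apply Nat.sInf_le
    rw [Set.mem_setOf_eq]
    exact key _ (pIter_mono G _ (le_max_left _ _) hLmem)
      (pIter_mono G _ (le_max_right _ _) hRmem)
  exact le_antisymm hle (max_le hgeL hgeR)
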